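/- Let μ ∈ M₊(X), ν ∈ M₊(Y) be finite nonnegative measures, let X̂ = X ∪ {∞̂}, Ŷ = Y ∪ {∞̂} with an added auxiliary point, and define μ̂ = μ + |ν|δ_∞̂ and ν̂ = ν + |μ|δ_∞̂. Then the map F : Γ≤(μ,ν) → Γ(μ̂,ν̂) given by F(γ) = γ + (μ−γ₁)⊗δ_∞̂ + δ_∞̂⊗(ν−γ₂) + |γ|·δ_(∞̂,∞̂) is a well-defined bijection; that is, F(γ) has marginals exactly μ̂ and ν̂, and every coupling of μ̂ and ν̂ arises as F(γ) for a unique γ ∈ Γ≤(μ,ν). -/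

import Mathlib

open MeasureTheory

section Aux

variable {X Y : Type*} [MeasurableSpace X] [MeasurableSpace Y]

lemma aux_singleton_eq : ({Sum.inr ()} : Set (X ⊕ Unit)) = (Set.range Sum.inl)ᶜ := by
  rw [Set.compl_range_inl]
  ext x
  cases x <;> simp

lemma aux_emb_inl {β : Type*} [MeasurableSpace β] :
    MeasurableEmbedding (Sum.inl : X → X ⊕ β) :=
  ⟨Sum.inl_injective, measurable_inl, fun _ hs => hs.inl_image⟩

lemma aux_meas_singleton : MeasurableSet ({Sum.inr ()} : Set (X ⊕ Unit)) := by
  rw [aux_singleton_eq]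
  exact (aux_emb_inl (X := X) (β := Unit)).measurableSet_range.compl

-- the two "marginal of F γ" computations, stated for the fst marginal
lemma aux_part1_fst (μ : Measure X) (ν : Measure Y) [IsFiniteMeasure μ] [IsFiniteMeasure ν]
    (γ : Measure (X × Y)) (h1 : γ.map Prod.fst ≤ μ) (h2 : γ.map Prod.snd ≤ ν) :
    (γ.map (Prod.map Sum.inl Sum.inl)
        + (μ - γ.map Prod.fst).map (fun x => (Sum.inl x, (Sum.inr () : Y ⊕ Unit)))
        + (ν - γ.map Prod.snd).map (fun y => ((Sum.inr () : X ⊕ Unit), Sum.inl y))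
        + (γ Set.univ) • Measure.dirac ((Sum.inr () : X ⊕ Unit), (Sum.inr () : Y ⊕ Unit))).map
        Prod.fst
      = μ.map Sum.inl + (ν Set.univ) • Measure.dirac (Sum.inr ()) := by
  haveI hfin1 : IsFiniteMeasure (γ.map Prod.fst) :=
    ⟨lt_of_le_of_lt (Measure.le_iff'.mp h1 _) (measure_lt_top μ _)⟩
  haveI hfin2 : IsFiniteMeasure (γ.map Prod.snd) :=
    ⟨lt_of_le_of_lt (Measure.le_iff'.mp h2 _) (measure_lt_top ν _)⟩
  have mF : Measurable (Prod.map (Sum.inl : X → X ⊕ Unit) (Sum.inl : Y → Y ⊕ Unit)) :=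
    (measurable_inl : Measurable (Sum.inl : X → X ⊕ Unit)).prodMap measurable_inl
  have mB : Measurable (fun x : X => ((Sum.inl x : X ⊕ Unit), (Sum.inr () : Y ⊕ Unit))) :=
    by exact measurable_inl.prodMk measurable_const
  have mC : Measurable (fun y : Y => ((Sum.inr () : X ⊕ Unit), (Sum.inl y : Y ⊕ Unit))) :=
    by exact measurable_const.prodMk measurable_inl
  rw [Measure.map_add _ _ measurable_fst, Measure.map_add _ _ measurable_fst,
    Measure.map_add _ _ measurable_fst, Measure.map_smul,
    Measure.map_dirac' measurable_fst]
  have e1 : (γ.map (Prod.map (Sum.inl : X → X ⊕ Unit) (Sum.inl : Y → Y ⊕ Unit))).map Prod.fst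
      = (γ.map Prod.fst).map (Sum.inl : X → X ⊕ Unit) := by
    rw [Measure.map_map measurable_fst mF, Measure.map_map measurable_inl measurable_fst]
    rfl
  have e2 : ((μ - γ.map Prod.fst).map
        (fun x => (Sum.inl x, (Sum.inr () : Y ⊕ Unit)))).map Prod.fst
      = (μ - γ.map Prod.fst).map (Sum.inl : X → X ⊕ Unit) := by
    rw [Measure.map_map measurable_fst mB]
    rfl
  have e3 : ((ν - γ.map Prod.snd).map
        (fun y => ((Sum.inr () : X ⊕ Unit), (Sum.inl y : Y ⊕ Unit)))).map Prod.fst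
      = ((ν - γ.map Prod.snd) Set.univ) • Measure.dirac (Sum.inr () : X ⊕ Unit) := by
    rw [Measure.map_map measurable_fst mC]
    exact Measure.map_const _ _
  rw [e1, e2, e3]
  have e4 : (γ.map Prod.fst).map (Sum.inl : X → X ⊕ Unit) + (μ - γ.map Prod.fst).map Sum.inl
      = μ.map Sum.inl := by
    rw [← Measure.map_add _ _ measurable_inl, add_comm, Measure.sub_add_cancel_of_le h1]
  have hγuniv : γ Set.univ = (γ.map Prod.snd) Set.univ := by
    rw [Measure.map_apply measurable_snd MeasurableSet.univ, Set.preimage_univ]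
  have e5 : ((ν - γ.map Prod.snd) Set.univ) • Measure.dirac ((Sum.inr () : X ⊕ Unit))
        + (γ Set.univ) • Measure.dirac (Sum.inr () : X ⊕ Unit)
      = (ν Set.univ) • Measure.dirac (Sum.inr () : X ⊕ Unit) := by
    rw [← add_smul, hγuniv, Measure.sub_apply MeasurableSet.univ h2,
      tsub_add_cancel_of_le (Measure.le_iff'.mp h2 _)]
  rw [add_assoc, e4, e5]

lemma aux_part1_snd (μ : Measure X) (ν : Measure Y) [IsFiniteMeasure μ] [IsFiniteMeasure ν]
    (γ : Measure (X × Y)) (h1 : γ.map Prod.fst ≤ μ) (h2 : γ.map Prod.snd ≤ ν) :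
    (γ.map (Prod.map Sum.inl Sum.inl)
        + (μ - γ.map Prod.fst).map (fun x => (Sum.inl x, (Sum.inr () : Y ⊕ Unit)))
        + (ν - γ.map Prod.snd).map (fun y => ((Sum.inr () : X ⊕ Unit), Sum.inl y))
        + (γ Set.univ) • Measure.dirac ((Sum.inr () : X ⊕ Unit), (Sum.inr () : Y ⊕ Unit))).map
        Prod.snd
      = ν.map Sum.inl + (μ Set.univ) • Measure.dirac (Sum.inr ()) := by
  haveI hfin1 : IsFiniteMeasure (γ.map Prod.fst) :=
    ⟨lt_of_le_of_lt (Measure.le_iff'.mp h1 _) (measure_lt_top μ _)⟩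
  haveI hfin2 : IsFiniteMeasure (γ.map Prod.snd) :=
    ⟨lt_of_le_of_lt (Measure.le_iff'.mp h2 _) (measure_lt_top ν _)⟩
  have mF : Measurable (Prod.map (Sum.inl : X → X ⊕ Unit) (Sum.inl : Y → Y ⊕ Unit)) :=
    (measurable_inl : Measurable (Sum.inl : X → X ⊕ Unit)).prodMap measurable_inl
  have mB : Measurable (fun x : X => ((Sum.inl x : X ⊕ Unit), (Sum.inr () : Y ⊕ Unit))) :=
    by exact measurable_inl.prodMk measurable_const
  have mC : Measurable (fun y : Y => ((Sum.inr () : X ⊕ Unit), (Sum.inl y : Y ⊕ Unit))) :=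
    by exact measurable_const.prodMk measurable_inl
  rw [Measure.map_add _ _ measurable_snd, Measure.map_add _ _ measurable_snd,
    Measure.map_add _ _ measurable_snd, Measure.map_smul,
    Measure.map_dirac' measurable_snd]
  have e1 : (γ.map (Prod.map (Sum.inl : X → X ⊕ Unit) (Sum.inl : Y → Y ⊕ Unit))).map Prod.snd
      = (γ.map Prod.snd).map (Sum.inl : Y → Y ⊕ Unit) := by
    rw [Measure.map_map measurable_snd mF, Measure.map_map measurable_inl measurable_snd]
    rfl
  have e2 : ((μ - γ.map Prod.fst).map
        (fun x => ((Sum.inl x : X ⊕ Unit), (Sum.inr () : Y ⊕ Unit)))).map Prod.snd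
      = ((μ - γ.map Prod.fst) Set.univ) • Measure.dirac (Sum.inr () : Y ⊕ Unit) := by
    rw [Measure.map_map measurable_snd mB]
    exact Measure.map_const _ _
  have e3 : ((ν - γ.map Prod.snd).map
        (fun y => ((Sum.inr () : X ⊕ Unit), (Sum.inl y : Y ⊕ Unit)))).map Prod.snd
      = (ν - γ.map Prod.snd).map (Sum.inl : Y → Y ⊕ Unit) := by
    rw [Measure.map_map measurable_snd mC]
    rfl
  rw [e1, e2, e3]
  have e4 : (γ.map Prod.snd).map (Sum.inl : Y → Y ⊕ Unit) + (ν - γ.map Prod.snd).map Sum.inl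
      = ν.map Sum.inl := by
    rw [← Measure.map_add _ _ measurable_inl, add_comm, Measure.sub_add_cancel_of_le h2]
  have hγuniv : γ Set.univ = (γ.map Prod.fst) Set.univ := by
    rw [Measure.map_apply measurable_fst MeasurableSet.univ, Set.preimage_univ]
  have e5 : ((μ - γ.map Prod.fst) Set.univ) • Measure.dirac ((Sum.inr () : Y ⊕ Unit))
        + (γ Set.univ) • Measure.dirac (Sum.inr () : Y ⊕ Unit)
      = (μ Set.univ) • Measure.dirac (Sum.inr () : Y ⊕ Unit) := by
    rw [← add_smul, hγuniv, Measure.sub_apply MeasurableSet.univ h1,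
      tsub_add_cancel_of_le (Measure.le_iff'.mp h1 _)]
  rw [← e4, ← e5]; abel

-- the measurable embedding X × Y → (X ⊕ Unit) × (Y ⊕ Unit)
lemma aux_emb_F : MeasurableEmbedding
    (Prod.map (Sum.inl : X → X ⊕ Unit) (Sum.inl : Y → Y ⊕ Unit)) := by
  exact (aux_emb_inl (X := X) (β := Unit)).prodMap (aux_emb_inl (X := Y) (β := Unit))

-- F (comap f γhat) recovers γ from F γ
lemma aux_comap_F (μ : Measure X) (ν : Measure Y) (γ : Measure (X × Y)) :
    Measure.comap (Prod.map (Sum.inl : X → X ⊕ Unit) (Sum.inl : Y → Y ⊕ Unit))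
      (γ.map (Prod.map Sum.inl Sum.inl)
        + (μ - γ.map Prod.fst).map (fun x => (Sum.inl x, (Sum.inr () : Y ⊕ Unit)))
        + (ν - γ.map Prod.snd).map (fun y => ((Sum.inr () : X ⊕ Unit), Sum.inl y))
        + (γ Set.univ) • Measure.dirac ((Sum.inr () : X ⊕ Unit), (Sum.inr () : Y ⊕ Unit)))
      = γ := by
  have hf := aux_emb_F (X := X) (Y := Y)
  have mB : Measurable (fun x : X => ((Sum.inl x : X ⊕ Unit), (Sum.inr () : Y ⊕ Unit))) :=
    by exact measurable_inl.prodMk measurable_const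
  have mC : Measurable (fun y : Y => ((Sum.inr () : X ⊕ Unit), (Sum.inl y : Y ⊕ Unit))) :=
    by exact measurable_const.prodMk measurable_inl
  ext s hs
  rw [hf.comap_apply]
  have hims : MeasurableSet (Prod.map (Sum.inl : X → X ⊕ Unit) (Sum.inl : Y → Y ⊕ Unit) '' s) :=
    hf.measurableSet_image.mpr hs
  rw [Measure.add_apply, Measure.add_apply, Measure.add_apply]
  have ht1 : γ.map (Prod.map (Sum.inl : X → X ⊕ Unit) (Sum.inl : Y → Y ⊕ Unit))
      (Prod.map (Sum.inl : X → X ⊕ Unit) (Sum.inl : Y → Y ⊕ Unit) '' s) = γ s := by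
    rw [Measure.map_apply hf.measurable hims, Set.preimage_image_eq s hf.injective]
  have ht2 : (μ - γ.map Prod.fst).map (fun x => ((Sum.inl x : X ⊕ Unit), (Sum.inr () : Y ⊕ Unit)))
      (Prod.map (Sum.inl : X → X ⊕ Unit) (Sum.inl : Y → Y ⊕ Unit) '' s) = 0 := by
    rw [Measure.map_apply mB hims]
    convert measure_empty (μ := μ - γ.map Prod.fst)
    ext x
    simp [Prod.map, Prod.ext_iff]
  have ht3 : (ν - γ.map Prod.snd).map (fun y => ((Sum.inr () : X ⊕ Unit), (Sum.inl y : Y ⊕ Unit)))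
      (Prod.map (Sum.inl : X → X ⊕ Unit) (Sum.inl : Y → Y ⊕ Unit) '' s) = 0 := by
    rw [Measure.map_apply mC hims]
    convert measure_empty (μ := ν - γ.map Prod.snd)
    ext y
    simp [Prod.map, Prod.ext_iff]
  have ht4 : ((γ Set.univ) • Measure.dirac ((Sum.inr () : X ⊕ Unit), (Sum.inr () : Y ⊕ Unit)))
      (Prod.map (Sum.inl : X → X ⊕ Unit) (Sum.inl : Y → Y ⊕ Unit) '' s) = 0 := by
    rw [Measure.smul_apply, Measure.dirac_apply' _ hims]
    rw [Set.indicator_of_notMem, smul_zero]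
    simp [Prod.map, Prod.ext_iff]
  rw [ht1, ht2, ht3, ht4, add_zero, add_zero, add_zero]

lemma aux_ptX_notmem (s : Set X) : (Sum.inr () : X ⊕ Unit) ∉ Sum.inl '' s := by
  simp

lemma aux_marg_fst (μ : Measure X) (c : ENNReal)
    (γhat : Measure ((X ⊕ Unit) × (Y ⊕ Unit)))
    (hμ : γhat.map Prod.fst = μ.map Sum.inl + c • Measure.dirac (Sum.inr ())) :
    (Measure.comap (Prod.map (Sum.inl : X → X ⊕ Unit) (Sum.inl : Y → Y ⊕ Unit)) γhat).map
      Prod.fst ≤ μ := by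
  have hf := aux_emb_F (X := X) (Y := Y)
  rw [Measure.le_iff]
  intro s hs
  rw [Measure.map_apply measurable_fst hs, hf.comap_apply]
  have hsub : Prod.map (Sum.inl : X → X ⊕ Unit) (Sum.inl : Y → Y ⊕ Unit) '' (Prod.fst ⁻¹' s)
      ⊆ Prod.fst ⁻¹' (Sum.inl '' s) := by
    rintro p ⟨⟨a, b⟩, hab, rfl⟩
    exact ⟨a, hab, rfl⟩
  refine le_trans (measure_mono hsub) ?_
  rw [← Measure.map_apply measurable_fst hs.inl_image, hμ, Measure.add_apply,
    Measure.map_apply measurable_inl hs.inl_image,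
    Set.preimage_image_eq s Sum.inl_injective, Measure.smul_apply,
    Measure.dirac_apply' _ hs.inl_image, Set.indicator_of_notMem (aux_ptX_notmem s),
    smul_zero, add_zero]

lemma aux_marg_snd (ν : Measure Y) (c : ENNReal)
    (γhat : Measure ((X ⊕ Unit) × (Y ⊕ Unit)))
    (hν : γhat.map Prod.snd = ν.map Sum.inl + c • Measure.dirac (Sum.inr ())) :
    (Measure.comap (Prod.map (Sum.inl : X → X ⊕ Unit) (Sum.inl : Y → Y ⊕ Unit)) γhat).map
      Prod.snd ≤ ν := by
  have hf := aux_emb_F (X := X) (Y := Y)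
  rw [Measure.le_iff]
  intro s hs
  rw [Measure.map_apply measurable_snd hs, hf.comap_apply]
  have hsub : Prod.map (Sum.inl : X → X ⊕ Unit) (Sum.inl : Y → Y ⊕ Unit) '' (Prod.snd ⁻¹' s)
      ⊆ Prod.snd ⁻¹' (Sum.inl '' s) := by
    rintro p ⟨⟨a, b⟩, hab, rfl⟩
    exact ⟨b, hab, rfl⟩
  refine le_trans (measure_mono hsub) ?_
  rw [← Measure.map_apply measurable_snd hs.inl_image, hν, Measure.add_apply,
    Measure.map_apply measurable_inl hs.inl_image,
    Set.preimage_image_eq s Sum.inl_injective, Measure.smul_apply,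
    Measure.dirac_apply' _ hs.inl_image, Set.indicator_of_notMem (aux_ptX_notmem s),
    smul_zero, add_zero]

lemma aux_reconstruct (μ : Measure X) (ν : Measure Y) [IsFiniteMeasure μ] [IsFiniteMeasure ν]
    (γhat : Measure ((X ⊕ Unit) × (Y ⊕ Unit)))
    (hμ : γhat.map Prod.fst
        = μ.map Sum.inl + (ν Set.univ) • Measure.dirac (Sum.inr ()))
    (hν : γhat.map Prod.snd
        = ν.map Sum.inl + (μ Set.univ) • Measure.dirac (Sum.inr ())) :
    (Measure.comap (Prod.map (Sum.inl : X → X ⊕ Unit) (Sum.inl : Y → Y ⊕ Unit)) γhat).map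
        (Prod.map Sum.inl Sum.inl)
      + (μ - (Measure.comap (Prod.map (Sum.inl : X → X ⊕ Unit) (Sum.inl : Y → Y ⊕ Unit))
          γhat).map Prod.fst).map (fun x => (Sum.inl x, (Sum.inr () : Y ⊕ Unit)))
      + (ν - (Measure.comap (Prod.map (Sum.inl : X → X ⊕ Unit) (Sum.inl : Y → Y ⊕ Unit))
          γhat).map Prod.snd).map (fun y => ((Sum.inr () : X ⊕ Unit), Sum.inl y))
      + ((Measure.comap (Prod.map (Sum.inl : X → X ⊕ Unit) (Sum.inl : Y → Y ⊕ Unit))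
          γhat) Set.univ)
          • Measure.dirac ((Sum.inr () : X ⊕ Unit), (Sum.inr () : Y ⊕ Unit))
      = γhat := by
  have hf := aux_emb_F (X := X) (Y := Y)
  set f := Prod.map (Sum.inl : X → X ⊕ Unit) (Sum.inl : Y → Y ⊕ Unit) with hfdef
  set γ := Measure.comap f γhat with hγdef
  set RX := Set.range (Sum.inl : X → X ⊕ Unit) with hRXdef
  set RY := Set.range (Sum.inl : Y → Y ⊕ Unit) with hRYdef
  set iX := (Sum.inr () : X ⊕ Unit) with hiXdef
  set iY := (Sum.inr () : Y ⊕ Unit) with hiYdef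
  have hRX : MeasurableSet RX := (aux_emb_inl (X := X) (β := Unit)).measurableSet_range
  have hRY : MeasurableSet RY := (aux_emb_inl (X := Y) (β := Unit)).measurableSet_range
  have hsX : MeasurableSet ({iX} : Set (X ⊕ Unit)) := aux_meas_singleton
  have hsY : MeasurableSet ({iY} : Set (Y ⊕ Unit)) := aux_meas_singleton
  have hXuniv : RX ∪ {iX} = Set.univ := by
    rw [hiXdef, aux_singleton_eq, Set.union_compl_self]
  have hYuniv : RY ∪ {iY} = Set.univ := by
    rw [hiYdef, aux_singleton_eq, Set.union_compl_self]
  have hiXR : iX ∉ RX := by simp [hiXdef, hRXdef]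
  have hiYR : iY ∉ RY := by simp [hiYdef, hRYdef]
  have hdisjY : Disjoint RY ({iY} : Set (Y ⊕ Unit)) := by
    rw [hiYdef, aux_singleton_eq]; exact disjoint_compl_right
  have hdisjX : Disjoint RX ({iX} : Set (X ⊕ Unit)) := by
    rw [hiXdef, aux_singleton_eq]; exact disjoint_compl_right
  -- finiteness of γhat
  have hγhat_univ : γhat Set.univ = μ Set.univ + ν Set.univ := by
    rw [← Set.preimage_univ (f := (Prod.fst : (X ⊕ Unit) × (Y ⊕ Unit) → X ⊕ Unit)),
      ← Measure.map_apply measurable_fst MeasurableSet.univ, hμ, Measure.add_apply,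
      Measure.map_apply measurable_inl MeasurableSet.univ, Measure.smul_apply]
    simp [smul_eq_mul]
  haveI hγhatfin : IsFiniteMeasure γhat := by
    constructor
    rw [hγhat_univ]
    exact ENNReal.add_lt_top.mpr ⟨measure_lt_top μ _, measure_lt_top ν _⟩
  have hγ1 : γ.map Prod.fst ≤ μ := aux_marg_fst μ _ γhat hμ
  have hγ2 : γ.map Prod.snd ≤ ν := aux_marg_snd ν _ γhat hν
  haveI hfin1 : IsFiniteMeasure (γ.map Prod.fst) :=
    ⟨lt_of_le_of_lt (Measure.le_iff'.mp hγ1 _) (measure_lt_top μ _)⟩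
  haveI hfin2 : IsFiniteMeasure (γ.map Prod.snd) :=
    ⟨lt_of_le_of_lt (Measure.le_iff'.mp hγ2 _) (measure_lt_top ν _)⟩
  have mB : Measurable (fun x : X => ((Sum.inl x : X ⊕ Unit), iY)) :=
    by exact measurable_inl.prodMk measurable_const
  have mC : Measurable (fun y : Y => (iX, (Sum.inl y : Y ⊕ Unit))) :=
    by exact measurable_const.prodMk measurable_inl
  have mJB : Measurable (fun a : X ⊕ Unit => (a, iY)) :=
    measurable_id.prodMk measurable_const
  have mJC : Measurable (fun b : Y ⊕ Unit => (iX, b)) :=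
    measurable_const.prodMk measurable_id
  -- piece 1
  have hA : γ.map f = γhat.restrict (RX ×ˢ RY) := by
    rw [hγdef, hf.map_comap, hfdef, Set.range_prodMap]
  -- restricted first-coordinate computation for piece 2
  have hm1 : ∀ t : Set (X ⊕ Unit), MeasurableSet t →
      γhat (Prod.fst ⁻¹' t ∩ RX ×ˢ RY) = (γ.map Prod.fst) (Sum.inl ⁻¹' t) := by
    intro t ht
    rw [← Measure.restrict_apply (measurable_fst ht), ← hA,
      Measure.map_apply hf.measurable (measurable_fst ht),
      Measure.map_apply measurable_fst (measurable_inl ht)]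
    rfl
  have hsumB : ∀ t : Set (X ⊕ Unit), MeasurableSet t →
      γhat (Prod.fst ⁻¹' t ∩ RX ×ˢ RY) + γhat (Prod.fst ⁻¹' t ∩ RX ×ˢ {iY})
        = μ (Sum.inl ⁻¹' t) := by
    intro t ht
    rw [← measure_union
      (Disjoint.mono Set.inter_subset_right Set.inter_subset_right
        ((Set.disjoint_prod).mpr (Or.inr hdisjY)))
      ((measurable_fst ht).inter (hRX.prod hsY)),
      ← Set.inter_union_distrib_left, ← Set.prod_union, hYuniv]
    have hset : Prod.fst ⁻¹' t ∩ RX ×ˢ (Set.univ : Set (Y ⊕ Unit))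
        = Prod.fst ⁻¹' (t ∩ RX) := by
      ext ⟨p, q⟩
      simp [and_comm]
    rw [hset, ← Measure.map_apply measurable_fst (ht.inter hRX), hμ, Measure.add_apply,
      Measure.map_apply measurable_inl (ht.inter hRX), Measure.smul_apply,
      Measure.dirac_apply' _ (ht.inter hRX),
      Set.indicator_of_notMem (fun h => hiXR h.2), smul_zero, add_zero]
    congr 1
    ext x
    simp [hRXdef]
  -- piece 2
  have ρBfst : (γhat.restrict (RX ×ˢ {iY})).map Prod.fst = (μ - γ.map Prod.fst).map Sum.inl := by
    ext t ht
    rw [Measure.map_apply measurable_fst ht, Measure.restrict_apply (measurable_fst ht),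
      Measure.map_apply measurable_inl ht, Measure.sub_apply (measurable_inl ht) hγ1]
    refine ENNReal.eq_sub_of_add_eq (measure_ne_top (γ.map Prod.fst) _) ?_
    rw [add_comm, ← hm1 t ht]
    exact hsumB t ht
  have ρB_eq : (μ - γ.map Prod.fst).map (fun x : X => ((Sum.inl x : X ⊕ Unit), iY))
      = γhat.restrict (RX ×ˢ {iY}) := by
    have h0 : (γhat.restrict (RX ×ˢ {iY})) ((Set.univ ×ˢ ({iY} : Set (Y ⊕ Unit)))ᶜ) = 0 := by
      rw [Measure.restrict_apply (MeasurableSet.univ.prod hsY).compl]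
      convert measure_empty (μ := γhat)
      ext ⟨p, q⟩
      simp only [Set.mem_inter_iff, Set.mem_compl_iff, Set.mem_prod, Set.mem_univ, true_and,
        Set.mem_singleton_iff, Set.mem_empty_iff_false, iff_false]
      tauto
    have hid : (γhat.restrict (RX ×ˢ {iY})).map
        (fun p : (X ⊕ Unit) × (Y ⊕ Unit) => (p.1, iY)) = γhat.restrict (RX ×ˢ {iY}) := by
      have hae : (fun p : (X ⊕ Unit) × (Y ⊕ Unit) => (p.1, iY))
          =ᵐ[γhat.restrict (RX ×ˢ {iY})] id := by
        rw [Filter.EventuallyEq, ae_iff]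
        refine measure_mono_null ?_ h0
        intro ⟨p, q⟩ hp
        simp only [Set.mem_setOf_eq] at hp
        simp only [Set.mem_compl_iff, Set.mem_prod, Set.mem_univ, true_and,
          Set.mem_singleton_iff]
        intro hq
        exact hp (by rw [hq]; rfl)
      rw [Measure.map_congr hae, Measure.map_id]
    calc (μ - γ.map Prod.fst).map (fun x : X => ((Sum.inl x : X ⊕ Unit), iY))
        = ((μ - γ.map Prod.fst).map Sum.inl).map (fun a : X ⊕ Unit => (a, iY)) := by
          rw [Measure.map_map mJB measurable_inl]; rfl
      _ = ((γhat.restrict (RX ×ˢ {iY})).map Prod.fst).map (fun a : X ⊕ Unit => (a, iY)) := by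
          rw [ρBfst]
      _ = (γhat.restrict (RX ×ˢ {iY})).map (fun p : (X ⊕ Unit) × (Y ⊕ Unit) => (p.1, iY)) := by
          rw [Measure.map_map mJB measurable_fst]; rfl
      _ = γhat.restrict (RX ×ˢ {iY}) := hid
  -- restricted second-coordinate computation for piece 3
  have hm2 : ∀ t : Set (Y ⊕ Unit), MeasurableSet t →
      γhat (Prod.snd ⁻¹' t ∩ RX ×ˢ RY) = (γ.map Prod.snd) (Sum.inl ⁻¹' t) := by
    intro t ht
    rw [← Measure.restrict_apply (measurable_snd ht), ← hA,
      Measure.map_apply hf.measurable (measurable_snd ht),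
      Measure.map_apply measurable_snd (measurable_inl ht)]
    rfl
  have hsumC : ∀ t : Set (Y ⊕ Unit), MeasurableSet t →
      γhat (Prod.snd ⁻¹' t ∩ RX ×ˢ RY) + γhat (Prod.snd ⁻¹' t ∩ {iX} ×ˢ RY)
        = ν (Sum.inl ⁻¹' t) := by
    intro t ht
    rw [← measure_union
      (Disjoint.mono Set.inter_subset_right Set.inter_subset_right
        ((Set.disjoint_prod).mpr (Or.inl hdisjX)))
      ((measurable_snd ht).inter (hsX.prod hRY)),
      ← Set.inter_union_distrib_left, ← Set.union_prod, hXuniv]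
    have hset : Prod.snd ⁻¹' t ∩ (Set.univ : Set (X ⊕ Unit)) ×ˢ RY
        = Prod.snd ⁻¹' (t ∩ RY) := by
      ext ⟨p, q⟩
      simp [and_comm]
    rw [hset, ← Measure.map_apply measurable_snd (ht.inter hRY), hν, Measure.add_apply,
      Measure.map_apply measurable_inl (ht.inter hRY), Measure.smul_apply,
      Measure.dirac_apply' _ (ht.inter hRY),
      Set.indicator_of_notMem (fun h => hiYR h.2), smul_zero, add_zero]
    congr 1
    ext y
    simp [hRYdef]
  -- piece 3
  have ρCsnd : (γhat.restrict ({iX} ×ˢ RY)).map Prod.snd = (ν - γ.map Prod.snd).map Sum.inl := by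
    ext t ht
    rw [Measure.map_apply measurable_snd ht, Measure.restrict_apply (measurable_snd ht),
      Measure.map_apply measurable_inl ht, Measure.sub_apply (measurable_inl ht) hγ2]
    refine ENNReal.eq_sub_of_add_eq (measure_ne_top (γ.map Prod.snd) _) ?_
    rw [add_comm, ← hm2 t ht]
    exact hsumC t ht
  have ρC_eq : (ν - γ.map Prod.snd).map (fun y : Y => (iX, (Sum.inl y : Y ⊕ Unit)))
      = γhat.restrict ({iX} ×ˢ RY) := by
    have h0 : (γhat.restrict ({iX} ×ˢ RY)) ((({iX} : Set (X ⊕ Unit)) ×ˢ Set.univ)ᶜ) = 0 := by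
      rw [Measure.restrict_apply (hsX.prod MeasurableSet.univ).compl]
      convert measure_empty (μ := γhat)
      ext ⟨p, q⟩
      simp only [Set.mem_inter_iff, Set.mem_compl_iff, Set.mem_prod, Set.mem_univ, and_true,
        Set.mem_singleton_iff, Set.mem_empty_iff_false, iff_false]
      tauto
    have hid : (γhat.restrict ({iX} ×ˢ RY)).map
        (fun p : (X ⊕ Unit) × (Y ⊕ Unit) => (iX, p.2)) = γhat.restrict ({iX} ×ˢ RY) := by
      have hae : (fun p : (X ⊕ Unit) × (Y ⊕ Unit) => (iX, p.2))
          =ᵐ[γhat.restrict ({iX} ×ˢ RY)] id := by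
        rw [Filter.EventuallyEq, ae_iff]
        refine measure_mono_null ?_ h0
        intro ⟨p, q⟩ hp
        simp only [Set.mem_setOf_eq] at hp
        simp only [Set.mem_compl_iff, Set.mem_prod, Set.mem_univ, and_true,
          Set.mem_singleton_iff]
        intro hq
        exact hp (by rw [hq]; rfl)
      rw [Measure.map_congr hae, Measure.map_id]
    calc (ν - γ.map Prod.snd).map (fun y : Y => (iX, (Sum.inl y : Y ⊕ Unit)))
        = ((ν - γ.map Prod.snd).map Sum.inl).map (fun b : Y ⊕ Unit => (iX, b)) := by
          rw [Measure.map_map mJC measurable_inl]; rfl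
      _ = ((γhat.restrict ({iX} ×ˢ RY)).map Prod.snd).map (fun b : Y ⊕ Unit => (iX, b)) := by
          rw [ρCsnd]
      _ = (γhat.restrict ({iX} ×ˢ RY)).map (fun p : (X ⊕ Unit) × (Y ⊕ Unit) => (iX, p.2)) := by
          rw [Measure.map_map mJC measurable_snd]; rfl
      _ = γhat.restrict ({iX} ×ˢ RY) := hid
  -- piece 4
  have hmassC : γhat ({iX} ×ˢ RY) + γhat {(iX, iY)} = ν Set.univ := by
    rw [← Set.singleton_prod_singleton,
      ← measure_union ((Set.disjoint_prod).mpr (Or.inr hdisjY)) (hsX.prod hsY),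
      ← Set.prod_union, hYuniv]
    have hset : ({iX} : Set (X ⊕ Unit)) ×ˢ (Set.univ : Set (Y ⊕ Unit))
        = Prod.fst ⁻¹' {iX} := by
      ext ⟨p, q⟩; simp [eq_comm]
    rw [hset, ← Measure.map_apply measurable_fst hsX, hμ, Measure.add_apply,
      Measure.map_apply measurable_inl hsX, Measure.smul_apply,
      Measure.dirac_apply' _ hsX]
    have : (Sum.inl ⁻¹' ({iX} : Set (X ⊕ Unit)) : Set X) = ∅ := by
      ext x; simp [hiXdef]
    rw [this, measure_empty]
    simp
  have hmassA : γhat (RX ×ˢ RY) + γhat ({iX} ×ˢ RY) = ν Set.univ := by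
    rw [← measure_union ((Set.disjoint_prod).mpr (Or.inl hdisjX)) (hsX.prod hRY),
      ← Set.union_prod, hXuniv]
    have hset : (Set.univ : Set (X ⊕ Unit)) ×ˢ RY = Prod.snd ⁻¹' RY := by
      ext ⟨p, q⟩; simp
    rw [hset, ← Measure.map_apply measurable_snd hRY, hν, Measure.add_apply,
      Measure.map_apply measurable_inl hRY, Measure.smul_apply,
      Measure.dirac_apply' _ hRY, Set.indicator_of_notMem hiYR, smul_zero, add_zero]
    have : (Sum.inl ⁻¹' RY : Set Y) = Set.univ := by
      ext y; simp [hRYdef]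
    rw [this]
  have hpt : γ Set.univ = γhat {(iX, iY)} := by
    have h1 : γ Set.univ = γhat (RX ×ˢ RY) := by
      rw [hγdef, hf.comap_apply, Set.image_univ, hfdef, Set.range_prodMap]
    rw [h1]
    have hcfin : γhat ({iX} ×ˢ RY) ≠ ⊤ := measure_ne_top γhat _
    have := hmassA.trans hmassC.symm
    rw [add_comm (γhat (RX ×ˢ RY)) _] at this
    exact ((ENNReal.add_right_inj hcfin).mp this)
  have ρD_eq : (γ Set.univ) • Measure.dirac (iX, iY) = γhat.restrict {(iX, iY)} := by
    rw [Measure.restrict_singleton, hpt]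
  -- assembly
  rw [hA, ρB_eq, ρC_eq, ρD_eq]
  have split1 : γhat.restrict (RX ×ˢ RY) + γhat.restrict (RX ×ˢ {iY})
      = γhat.restrict (RX ×ˢ Set.univ) := by
    rw [← Measure.restrict_union ((Set.disjoint_prod).mpr (Or.inr hdisjY)) (hRX.prod hsY),
      ← Set.prod_union, hYuniv]
  have split2 : γhat.restrict ({iX} ×ˢ RY) + γhat.restrict {(iX, iY)}
      = γhat.restrict (({iX} : Set (X ⊕ Unit)) ×ˢ Set.univ) := by
    rw [← Set.singleton_prod_singleton,
      ← Measure.restrict_union ((Set.disjoint_prod).mpr (Or.inr hdisjY)) (hsX.prod hsY),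
      ← Set.prod_union, hYuniv]
  have hcompl : (({iX} : Set (X ⊕ Unit)) ×ˢ (Set.univ : Set (Y ⊕ Unit)))
      = (RX ×ˢ (Set.univ : Set (Y ⊕ Unit)))ᶜ := by
    ext ⟨p, q⟩
    simp only [Set.mem_prod, Set.mem_univ, and_true, Set.mem_compl_iff,
      Set.mem_singleton_iff, hiXdef, hRXdef]
    cases p <;> simp
  rw [add_assoc, split2, split1, hcompl,
    Measure.restrict_add_restrict_compl (hRX.prod MeasurableSet.univ)]

end Aux


/-- Caffarelli–McCann's correspondence: the map `F` sending a partial plan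
`γ ∈ Γ≤(μ,ν)` to `γ + (μ-γ₁)⊗δ_∞̂ + δ_∞̂⊗(ν-γ₂) + |γ|δ_(∞̂,∞̂)` is a bijection onto
the couplings of `μ̂ = μ + |ν|δ_∞̂` and `ν̂ = ν + |μ|δ_∞̂`.  The auxiliary point
`∞̂` is modeled by `Sum.inr () : X ⊕ Unit`. -/
theorem stmt_17 {X Y : Type*} [MeasurableSpace X] [MeasurableSpace Y]
    (μ : Measure X) (ν : Measure Y) [IsFiniteMeasure μ] [IsFiniteMeasure ν] :
    let infX : X ⊕ Unit := Sum.inr ()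
    let infY : Y ⊕ Unit := Sum.inr ()
    let μhat : Measure (X ⊕ Unit) := μ.map Sum.inl + (ν Set.univ) • Measure.dirac infX
    let νhat : Measure (Y ⊕ Unit) := ν.map Sum.inl + (μ Set.univ) • Measure.dirac infY
    let F : Measure (X × Y) → Measure ((X ⊕ Unit) × (Y ⊕ Unit)) := fun γ =>
      γ.map (Prod.map Sum.inl Sum.inl)
        + (μ - γ.map Prod.fst).map (fun x => (Sum.inl x, infY))
        + (ν - γ.map Prod.snd).map (fun y => (infX, Sum.inl y))
        + (γ Set.univ) • Measure.dirac (infX, infY)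
    (∀ γ : Measure (X × Y), γ.map Prod.fst ≤ μ → γ.map Prod.snd ≤ ν →
      ((F γ).map Prod.fst = μhat ∧ (F γ).map Prod.snd = νhat)) ∧
    (∀ γhat : Measure ((X ⊕ Unit) × (Y ⊕ Unit)),
      γhat.map Prod.fst = μhat → γhat.map Prod.snd = νhat →
      ∃! γ : Measure (X × Y),
        (γ.map Prod.fst ≤ μ ∧ γ.map Prod.snd ≤ ν) ∧ F γ = γhat) := by
  
  intro infX infY μhat νhat F
  constructor
  · intro γ h1 h2
    exact ⟨aux_part1_fst μ ν γ h1 h2, aux_part1_snd μ ν γ h1 h2⟩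
  · intro γhat hμ hν
    refine ⟨Measure.comap (Prod.map (Sum.inl : X → X ⊕ Unit) (Sum.inl : Y → Y ⊕ Unit)) γhat,
      ⟨⟨aux_marg_fst μ _ γhat hμ, aux_marg_snd ν _ γhat hν⟩,
        aux_reconstruct μ ν γhat hμ hν⟩, ?_⟩
    rintro γ' ⟨⟨h1, h2⟩, hFγ'⟩
    have hrec := aux_comap_F μ ν γ'
    rw [show (γ'.map (Prod.map Sum.inl Sum.inl)
        + (μ - γ'.map Prod.fst).map (fun x => (Sum.inl x, (Sum.inr () : Y ⊕ Unit)))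
        + (ν - γ'.map Prod.snd).map (fun y => ((Sum.inr () : X ⊕ Unit), Sum.inl y))
        + (γ' Set.univ) • Measure.dirac ((Sum.inr () : X ⊕ Unit), (Sum.inr () : Y ⊕ Unit)))
        = γhat from hFγ'] at hrec
    exact hrec.symm
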